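/- Let x be a real irrational root of x² + px + q = 0 with p, q ∈ ℤ. Then the period of the continued fraction expansion of x, viewed as a cyclic sequence, is a palindrome: it is symmetric about some point (either an element of the cycle or between two elements). -/

import Mathlib

/-- The sequence of complete quotients of the continued fraction algorithm. -/
noncomputable def cq (x : ℝ) : ℕ → ℝ
  | 0 => x
  | n + 1 => (Int.fract (cq x n))⁻¹

/-- The `n`-th digit of the continued fraction expansion of `x`. -/
noncomputable def cfDigit (x : ℝ) (n : ℕ) : ℤ := ⌊cq x n⌋

/-- `b` is a period of the (eventually periodic) continued fraction of `x`. -/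
def IsCFPeriod (x : ℝ) (b : List ℤ) : Prop :=
  b ≠ [] ∧ ∃ N : ℕ, ∀ i : ℕ, cfDigit x (N + i) = b.getD (i % b.length) 0

/-- `b` is a minimal period of the continued fraction of `x`. -/
def IsMinCFPeriod (x : ℝ) (b : List ℤ) : Prop :=
  IsCFPeriod x b ∧ ∀ c : List ℤ, IsCFPeriod x c → b.length ≤ c.length



lemma cq_zero (x : ℝ) : cq x 0 = x := rfl

lemma cq_succ (x : ℝ) (n : ℕ) : cq x (n + 1) = (Int.fract (cq x n))⁻¹ := rfl

lemma Irrational.fract' {y : ℝ} (h : Irrational y) : Irrational (Int.fract y) := by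
  have := h.sub_intCast ⌊y⌋
  rw [Int.fract]
  exact this

lemma Irrational.inv' {y : ℝ} (h : Irrational y) : Irrational y⁻¹ := by
  rintro ⟨r, hr⟩
  have hy : y ≠ 0 := by
    intro h0; exact h ⟨0, by simp [h0]⟩
  have hr0 : (r : ℝ) ≠ 0 := by rw [hr]; exact inv_ne_zero hy
  have : ((r⁻¹ : ℚ) : ℝ) = y := by
    push_cast
    rw [hr]
    simp
  exact h ⟨r⁻¹, this⟩

lemma irrational_cq {x : ℝ} (h : Irrational x) (n : ℕ) : Irrational (cq x n) := by
  induction n with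
  | zero => exact h
  | succ n ih => rw [cq_succ]; exact ih.fract'.inv'

lemma fract_pos {y : ℝ} (h : Irrational y) : 0 < Int.fract y :=
  lt_of_le_of_ne (Int.fract_nonneg y) (fun hy => h.fract' ⟨0, by simp [hy.symm]⟩)

lemma one_lt_cq {x : ℝ} (h : Irrational x) (n : ℕ) : 1 < cq x (n + 1) := by
  rw [cq_succ]
  have h1 := fract_pos (irrational_cq h n)
  have h2 := Int.fract_lt_one (cq x n)
  rw [one_lt_inv_iff₀]
  exact ⟨h1, h2⟩

lemma cq_add (x : ℝ) (m n : ℕ) : cq x (m + n) = cq (cq x m) n := by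
  induction n with
  | zero => rfl
  | succ n ih => rw [← Nat.add_assoc, cq_succ, ih, cq_succ]

lemma cfDigit_shift (x : ℝ) (m n : ℕ) : cfDigit x (m + n) = cfDigit (cq x m) n := by
  unfold cfDigit; rw [cq_add]

lemma one_le_cfDigit {x : ℝ} (h : Irrational x) (n : ℕ) : 1 ≤ cfDigit x (n + 1) := by
  unfold cfDigit
  exact Int.le_floor.2 (by exact_mod_cast (one_lt_cq h n).le)

/-- reading off a digit: if `z = a + y⁻¹` with `y > 1` then `⌊z⌋ = a` and `cq z 1 = y`. -/
lemma step_read {y z : ℝ} {a : ℤ} (hy : 1 < y) (hz : z = (a : ℝ) + y⁻¹) :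
    ⌊z⌋ = a ∧ cq z 1 = y := by
  have h0 : 0 < y⁻¹ := inv_pos.2 (lt_trans one_pos hy)
  have h1 : y⁻¹ < 1 := by rw [inv_lt_one_iff₀]; right; exact hy
  have hfl : ⌊z⌋ = a := by
    rw [hz, Int.floor_eq_iff]
    constructor <;> nlinarith
  refine ⟨hfl, ?_⟩
  rw [cq_succ, cq_zero, Int.fract, hfl, hz]
  simp [inv_inv]

lemma fract_int_add' (c : ℤ) (x : ℝ) : Int.fract ((c : ℝ) + x) = Int.fract x := by
  simpa using Int.fract_int_add c x

lemma cq_int_add (c : ℤ) (x : ℝ) (n : ℕ) : cq ((c : ℝ) + x) (1 + n) = cq x (1 + n) := by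
  rw [cq_add, cq_add]
  congr 1
  rw [cq_succ, cq_succ, cq_zero, cq_zero, fract_int_add']

lemma cfDigit_int_add (c : ℤ) (x : ℝ) (n : ℕ) :
    cfDigit ((c : ℝ) + x) (1 + n) = cfDigit x (1 + n) := by
  unfold cfDigit; rw [cq_int_add]


/-- Continuant matrix entries: `cm a n = (A,B,C,D)` with
`(A B; C D) = ∏_{i<n} (a i, 1; 1, 0)`. -/
def cm (a : ℕ → ℤ) : ℕ → ℤ × ℤ × ℤ × ℤ
  | 0 => (1, 0, 0, 1)
  | n + 1 =>
    ((cm a n).1 * a n + (cm a n).2.1, (cm a n).1,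
      (cm a n).2.2.1 * a n + (cm a n).2.2.2, (cm a n).2.2.1)

lemma cm_succ (a : ℕ → ℤ) (n : ℕ) :
    cm a (n + 1) = ((cm a n).1 * a n + (cm a n).2.1, (cm a n).1,
      (cm a n).2.2.1 * a n + (cm a n).2.2.2, (cm a n).2.2.1) := rfl

lemma cm_det (a : ℕ → ℤ) (n : ℕ) :
    ((cm a n).1 * (cm a n).2.2.2 - (cm a n).2.1 * (cm a n).2.2.1) = (-1) ^ n := by
  induction n with
  | zero => simp [cm]
  | succ n ih =>
    rw [cm_succ]
    dsimp only
    rw [pow_succ]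
    nlinarith [ih]

lemma cm_pos {a : ℕ → ℤ} (ha : ∀ n, 1 ≤ a (n + 1)) :
    ∀ n, 1 ≤ n → 1 ≤ (cm a n).2.2.1 ∧ 0 ≤ (cm a n).2.2.2 ∧
      (n : ℤ) ≤ (cm a n).2.2.1 + (cm a n).2.2.2 := by
  intro n hn
  induction n with
  | zero => omega
  | succ n ih =>
    rcases Nat.eq_or_lt_of_le hn with h1 | h1
    · have : n = 0 := by omega
      subst this
      simp [cm_succ, cm]
    · have hn1 : 1 ≤ n := by omega
      obtain ⟨hC, hD, hCD⟩ := ih hn1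
      obtain ⟨m, hm⟩ : ∃ m, n = m + 1 := ⟨n - 1, by omega⟩
      have han : 1 ≤ a n := by rw [hm]; exact ha m
      rw [cm_succ]
      dsimp only
      refine ⟨by nlinarith, by omega, by push_cast; nlinarith⟩

/-- key identity: `w * (C_m * w_m + D_m) = A_m * w_m + B_m`. -/
lemma cfrac_identity {w : ℝ} (hw : Irrational w) (m : ℕ) :
    w * ((cm (cfDigit w) m).2.2.1 * cq w m + (cm (cfDigit w) m).2.2.2)
      = (cm (cfDigit w) m).1 * cq w m + (cm (cfDigit w) m).2.1 := by
  induction m with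
  | zero => simp [cm, cq_zero]
  | succ m ih =>
    have hfr : Int.fract (cq w m) ≠ 0 := (fract_pos (irrational_cq hw m)).ne'
    have h2 : (cq w m - (⌊cq w m⌋ : ℝ)) * cq w (m + 1) = 1 := by
      rw [cq_succ]
      rw [Int.fract] at hfr ⊢
      exact mul_inv_cancel₀ hfr
    have hkey : cq w m * cq w (m + 1) = ((cfDigit w m : ℤ) : ℝ) * cq w (m + 1) + 1 := by
      unfold cfDigit
      linear_combination h2
    rw [cm_succ]
    dsimp only
    push_cast
    linear_combination cq w (m+1) * ih
      - (w * ((cm (cfDigit w) m).2.2.1 : ℝ) - ((cm (cfDigit w) m).1 : ℝ)) * hkey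

lemma abs_sub_lt_one_of_floor_eq {U V : ℝ} (h : ⌊U⌋ = ⌊V⌋) : |U - V| < 1 := by
  have h1 : U - (⌊U⌋ : ℝ) < 1 := by have := Int.fract_lt_one U; rwa [Int.fract] at this
  have h2 : (0:ℝ) ≤ U - (⌊U⌋ : ℝ) := by have := Int.fract_nonneg U; rwa [Int.fract] at this
  have h3 : V - (⌊V⌋ : ℝ) < 1 := by have := Int.fract_lt_one V; rwa [Int.fract] at this
  have h4 : (0:ℝ) ≤ V - (⌊V⌋ : ℝ) := by have := Int.fract_nonneg V; rwa [Int.fract] at this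
  have hfl : ((⌊U⌋ : ℤ) : ℝ) = ((⌊V⌋ : ℤ) : ℝ) := by rw [h]
  rw [abs_sub_lt_iff]
  constructor <;> linarith

set_option maxHeartbeats 1000000 in
lemma cf_inj {u v : ℝ} (hu : Irrational u) (hv : Irrational v)
    (h : ∀ n, cfDigit u n = cfDigit v n) : u = v := by
  by_contra hne
  have hd : 0 < |u - v| := abs_pos.2 (sub_ne_zero.2 hne)
  obtain ⟨m, hm⟩ := exists_nat_gt (1 / |u - v|)
  have hm0 : 0 < m := by
    have : (0:ℝ) < (m:ℝ) := lt_trans (div_pos one_pos hd) hm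
    exact_mod_cast this
  have hm1 : 1 ≤ m := hm0
  have ha1 : ∀ n, 1 ≤ cfDigit u (n + 1) := fun n => one_le_cfDigit hu n
  obtain ⟨hC, hD, hCD⟩ := cm_pos ha1 m hm1
  obtain ⟨A, B, C, D, h4⟩ : ∃ A B C D, cm (cfDigit u) m = (A, B, C, D) :=
    ⟨_, _, _, _, rfl⟩
  rw [h4] at hC hD hCD
  dsimp only at hC hD hCD
  have hidu : u * ((C:ℝ) * cq u m + (D:ℝ)) = (A:ℝ) * cq u m + (B:ℝ) := by
    have := cfrac_identity hu m
    rw [h4] at this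
    exact_mod_cast this
  have hidv : v * ((C:ℝ) * cq v m + (D:ℝ)) = (A:ℝ) * cq v m + (B:ℝ) := by
    have := cfrac_identity hv m
    have haeq : cfDigit v = cfDigit u := funext fun n => (h n).symm
    rw [haeq, h4] at this
    exact_mod_cast this
  set U := cq u m with hU
  set V := cq v m with hV
  have hC1 : (1 : ℝ) ≤ (C:ℝ) := by exact_mod_cast hC
  have hD0 : (0 : ℝ) ≤ (D:ℝ) := by exact_mod_cast hD
  have hCDm : (m : ℝ) ≤ (C:ℝ) + (D:ℝ) := by exact_mod_cast hCD
  obtain ⟨m', hm'⟩ : ∃ m', m = m' + 1 := ⟨m - 1, by omega⟩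
  have hU1' : 1 < U := by rw [hU, hm']; exact one_lt_cq hu m'
  have hV1' : 1 < V := by rw [hV, hm']; exact one_lt_cq hv m'
  have hUV : |U - V| < 1 := abs_sub_lt_one_of_floor_eq (h m)
  have hdenU : (m : ℝ) ≤ (C:ℝ) * U + D := by nlinarith
  have hdenV : (m : ℝ) ≤ (C:ℝ) * V + D := by nlinarith
  have hm1R : (1:ℝ) ≤ (m:ℝ) := by exact_mod_cast hm1
  have hdenU0 : (0 : ℝ) < (C:ℝ) * U + D := by linarith
  have hdenV0 : (0 : ℝ) < (C:ℝ) * V + D := by linarith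
  have hdet : (A:ℝ) * D - (B:ℝ) * C = (-1) ^ m := by
    have := cm_det (cfDigit u) m
    rw [h4] at this
    dsimp only at this
    exact_mod_cast congrArg (fun z : ℤ => (z : ℝ)) this
  have hdet1 : |(A:ℝ) * D - (B:ℝ) * C| = 1 := by
    rw [hdet, abs_pow, abs_neg, abs_one, one_pow]
  have hkey : (u - v) * (((C:ℝ) * U + D) * ((C:ℝ) * V + D))
      = ((A:ℝ) * D - (B:ℝ) * C) * (U - V) := by nlinarith [hidu, hidv]
  have habs : |u - v| * (((C:ℝ) * U + D) * ((C:ℝ) * V + D)) = |U - V| := by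
    have h5 : |u - v| * |((C:ℝ) * U + D) * ((C:ℝ) * V + D)|
        = |(A:ℝ) * D - (B:ℝ) * C| * |U - V| := by
      rw [← abs_mul, ← abs_mul, hkey]
    rw [abs_of_pos (mul_pos hdenU0 hdenV0)] at h5
    rw [h5, hdet1, one_mul]
  have e2 : |u - v| * ((m:ℝ) * m) < 1 := by
    have hmm : (m : ℝ) * m ≤ ((C:ℝ) * U + D) * ((C:ℝ) * V + D) := by nlinarith
    calc |u - v| * ((m:ℝ)*m) ≤ |u - v| * (((C:ℝ) * U + D) * ((C:ℝ) * V + D)) :=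
          mul_le_mul_of_nonneg_left hmm (abs_nonneg _)
      _ = |U - V| := habs
      _ < 1 := hUV
  have e1 : 1 < (m:ℝ) * |u - v| := by
    rw [div_lt_iff₀ hd] at hm
    linarith
  have e3 : (m:ℝ) * 1 ≤ (m:ℝ) * ((m:ℝ) * |u - v|) :=
    mul_le_mul_of_nonneg_left e1.le (Nat.cast_nonneg m)
  nlinarith [e2, e3, hm1R]

lemma getD_rotate (u : List ℤ) (r i : ℕ) (hi : i < u.length) :
    (u.rotate r).getD i 0 = u.getD ((i + r) % u.length) 0 := by
  have hk : 0 < u.length := Nat.lt_of_le_of_lt (Nat.zero_le i) hi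
  have h1 : i < (u.rotate r).length := by rwa [List.length_rotate]
  have h2 : (i + r) % u.length < u.length := Nat.mod_lt _ hk
  rw [List.getD_eq_getElem _ 0 h1, List.getD_eq_getElem _ 0 h2, List.getElem_rotate]

lemma getD_reverse (u : List ℤ) (i : ℕ) (hi : i < u.length) :
    u.reverse.getD i 0 = u.getD (u.length - 1 - i) 0 := by
  have h1 : i < u.reverse.length := by rwa [List.length_reverse]
  have h2 : u.length - 1 - i < u.length := by omega
  rw [List.getD_eq_getElem _ 0 h1, List.getD_eq_getElem _ 0 h2, List.getElem_reverse]

lemma mod_helper {k t j : ℕ} (hk : 0 < k) (h : j + 1 ≤ k * t) :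
    (k * t - 1 - j) % k = k - 1 - j % k := by
  induction t with
  | zero => simp at h
  | succ t ih =>
    have hkk : k * (t + 1) = k * t + k := by ring
    rcases Nat.lt_or_ge j (k * t) with h' | h'
    · have e : k * (t + 1) - 1 - j = (k * t - 1 - j) + k := by omega
      rw [e, Nat.add_mod_right, ih h']
    · have hjlt : j - k * t < k := by omega
      have hjk : j % k = j - k * t := by
        conv_lhs => rw [show j = k * t + (j - k * t) by omega]
        rw [Nat.mul_add_mod]
        exact Nat.mod_eq_of_lt hjlt
      have e2 : k * (t + 1) - 1 - j = k - 1 - (j - k * t) := by omega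
      rw [e2, hjk]
      exact Nat.mod_eq_of_lt (by omega)

/-- two eventual periods of the same length of a digit stream are rotations
of each other. -/
lemma period_words_rotate {w : ℝ} {u₁ u₂ : List ℤ} {N₁ N₂ : ℕ}
    (hlen : u₁.length = u₂.length) (hk : 0 < u₁.length)
    (h1 : ∀ i, cfDigit w (N₁ + i) = u₁.getD (i % u₁.length) 0)
    (h2 : ∀ i, cfDigit w (N₂ + i) = u₂.getD (i % u₂.length) 0) :
    ∃ t, u₂ = u₁.rotate t := by
  set k := u₁.length with hkdef
  refine ⟨(N₂ + (k - N₁ % k)) % k, ?_⟩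
  have hd := Nat.div_add_mod N₁ k
  have hm : N₁ % k < k := Nat.mod_lt _ hk
  apply List.ext_getElem (by rw [List.length_rotate]; omega)
  intro i hi hi'
  have hik : i < k := by omega
  set j := i + (k - N₁ % k) with hj
  -- common position N₁ + N₂ + j
  have key : u₁.getD ((N₂ + j) % k) 0 = u₂.getD ((N₁ + j) % k) 0 := by
    have e1 := h1 (N₂ + j)
    have e2 := h2 (N₁ + j)
    rw [show N₁ + (N₂ + j) = N₂ + (N₁ + j) by omega] at e1
    rw [← hlen] at e2
    rw [e1] at e2
    exact e2
  have hc1 : (N₁ + j) % k = i := by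
    have e : N₁ + j = k * (N₁ / k) + (k + i) := by omega
    rw [e, Nat.mul_add_mod, Nat.add_mod_left]
    exact Nat.mod_eq_of_lt hik
  have hc2 : (N₂ + j) % k = (i + (N₂ + (k - N₁ % k)) % k) % k := by
    rw [Nat.add_mod_mod]
    congr 1
    omega
  rw [hc1, hc2] at key
  have hrlt : (i + (N₂ + (k - N₁ % k)) % k) % k < k := Nat.mod_lt _ hk
  rw [List.getD_eq_getElem _ 0 (by omega : i < u₂.length),
    List.getD_eq_getElem _ 0 (by omega : (i + (N₂ + (k - N₁ % k)) % k) % k < u₁.length)] at key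
  rw [← key, List.getElem_rotate]

/-- One step of the continued fraction algorithm on `ℚ`-pairs representing
`r + s·ρ` in the quadratic field of `ρ² + Pρ + Q = 0`. -/
def pstep (P Q a : ℤ) (t : ℚ × ℚ) : ℚ × ℚ :=
  ((t.1 - a - t.2 * P) / ((t.1 - a)^2 - P * (t.1 - a) * t.2 + Q * t.2^2),
   -t.2 / ((t.1 - a)^2 - P * (t.1 - a) * t.2 + Q * t.2^2))

noncomputable def pseq (P Q : ℤ) (x₀ : ℝ) : ℕ → ℚ × ℚ
  | 0 => (0, 1)
  | n + 1 => pstep P Q (cfDigit x₀ n) (pseq P Q x₀ n)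

noncomputable def pval (ρ : ℝ) (t : ℚ × ℚ) : ℝ := (t.1 : ℝ) + (t.2 : ℝ) * ρ

lemma pval_irrational {ρ : ℝ} (hρ : Irrational ρ) {t : ℚ × ℚ} (ht : t.2 ≠ 0) :
    Irrational (pval ρ t) := by
  unfold pval
  exact ((hρ.ratCast_mul ht).ratCast_add t.1)

lemma pval_injective {ρ : ℝ} (hρ : Irrational ρ) {t t' : ℚ × ℚ}
    (h : pval ρ t = pval ρ t') : t = t' := by
  unfold pval at h
  by_cases h2 : t.2 = t'.2
  · have h1 : (t.1 : ℝ) = t'.1 := by rw [h2] at h; linarith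
    have : t.1 = t'.1 := by exact_mod_cast h1
    exact Prod.ext this h2
  · exfalso
    apply hρ
    refine ⟨(t.1 - t'.1) / (t'.2 - t.2), ?_⟩
    have h2' : ((t'.2 : ℝ) - (t.2 : ℝ)) ≠ 0 := by
      rw [sub_ne_zero]
      exact_mod_cast Ne.symm h2
    push_cast
    rw [div_eq_iff h2']
    push_cast at h
    linarith

/-- norm identity. -/
lemma pval_norm {P Q : ℤ} {ρ : ℝ} (hρ : ρ^2 + P * ρ + Q = 0) (t : ℚ × ℚ) :
    pval ρ t * pval (-P - ρ) t = ((t.1^2 - P * t.1 * t.2 + Q * t.2^2 : ℚ) : ℝ) := by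
  unfold pval
  push_cast
  linear_combination (-(t.2:ℝ)^2) * hρ

/-- The step inverts the value, for both roots simultaneously. -/
lemma pval_pstep {P Q : ℤ} {ρ : ℝ} (hρ : ρ^2 + P * ρ + Q = 0)
    (hρ' : (-P - ρ)^2 + P * (-P - ρ) + Q = 0)
    (a : ℤ) (t : ℚ × ℚ)
    (h1 : pval ρ (t.1 - a, t.2) ≠ 0) (h2 : pval (-P - ρ) (t.1 - a, t.2) ≠ 0) :
    pval ρ (pstep P Q a t) = (pval ρ (t.1 - a, t.2))⁻¹ := by
  set r : ℚ := t.1 - a with hr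
  have hnm : ((((t.1 - a)^2 - P * (t.1 - a) * t.2 + Q * t.2^2 : ℚ)) : ℝ) ≠ 0 := by
    rw [← pval_norm hρ (t.1 - (a:ℚ), t.2)]
    exact mul_ne_zero h1 h2
  have hnmQ : ((t.1 - a)^2 - P * (t.1 - a) * t.2 + Q * t.2^2 : ℚ) ≠ 0 := by
    exact_mod_cast hnm
  apply eq_inv_of_mul_eq_one_left
  have expand : (((t.1:ℝ) - a - t.2 * P) + (-(t.2:ℝ)) * ρ) * (((t.1:ℝ) - a) + (t.2:ℝ) * ρ)
      = ((((t.1 - a)^2 - P * (t.1 - a) * t.2 + Q * t.2^2 : ℚ)) : ℝ) := by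
    push_cast
    linear_combination (-(t.2:ℝ)^2) * hρ
  have hform : pval ρ (pstep P Q a t)
      = (((t.1:ℝ) - a - t.2 * P) + (-(t.2:ℝ)) * ρ)
        / ((((t.1 - a)^2 - P * (t.1 - a) * t.2 + Q * t.2^2 : ℚ)) : ℝ) := by
    unfold pstep pval
    dsimp only
    push_cast
    ring
  have hform2 : pval ρ (t.1 - (a:ℚ), t.2) = ((t.1:ℝ) - a) + (t.2:ℝ) * ρ := by
    unfold pval; push_cast; ring
  rw [hform, hform2, div_mul_eq_mul_div, expand, div_self hnm]

section Machinery

variable {P Q : ℤ} {ξ : ℝ}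

lemma eta_irr (hirr : Irrational ξ) : Irrational (-(P : ℝ) - ξ) := by
  have := hirr.intCast_sub (-P)
  convert this using 2
  push_cast
  ring

lemma eta_root (hroot : ξ^2 + P * ξ + Q = 0) :
    (-(P:ℝ) - ξ)^2 + P * (-(P:ℝ) - ξ) + Q = 0 := by linear_combination hroot

lemma pval_shift (ρ : ℝ) (t : ℚ × ℚ) (a : ℤ) :
    pval ρ (t.1 - (a : ℚ), t.2) = pval ρ t - (a : ℝ) := by
  unfold pval; push_cast; ring

lemma pseq_spec (hirr : Irrational ξ) (hroot : ξ^2 + P * ξ + Q = 0) :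
    ∀ n, pval ξ (pseq P Q ξ n) = cq ξ n ∧ (pseq P Q ξ n).2 ≠ 0 := by
  intro n
  induction n with
  | zero =>
    constructor
    · show pval ξ (0, 1) = cq ξ 0
      unfold pval; push_cast; rw [cq_zero]; ring
    · show (1 : ℚ) ≠ 0; norm_num
  | succ n ih =>
    obtain ⟨hv, hs⟩ := ih
    set t := pseq P Q ξ n with ht
    set a := cfDigit ξ n with ha
    have hfr : Int.fract (cq ξ n) ≠ 0 := (fract_pos (irrational_cq hirr n)).ne'
    have hfr' : cq ξ n - (a : ℝ) ≠ 0 := by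
      rw [ha]
      show cq ξ n - (⌊cq ξ n⌋ : ℝ) ≠ 0
      rw [← Int.fract]; exact hfr
    have h1 : pval ξ (t.1 - (a:ℚ), t.2) ≠ 0 := by
      rw [pval_shift, hv]; exact hfr'
    have h2 : pval (-(P:ℝ) - ξ) (t.1 - (a:ℚ), t.2) ≠ 0 :=
      (pval_irrational (eta_irr hirr) (by exact hs)).ne_zero
    have hstep := pval_pstep hroot (eta_root hroot) a t h1 h2
    constructor
    · show pval ξ (pstep P Q a t) = cq ξ (n + 1)
      rw [hstep, pval_shift, hv, cq_succ, Int.fract]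
      rfl
    · show (pstep P Q a t).2 ≠ 0
      unfold pstep
      dsimp only
      apply div_ne_zero (neg_ne_zero.2 hs)
      have hnm : (((t.1 - a)^2 - P * (t.1 - a) * t.2 + Q * t.2^2 : ℚ) : ℝ) ≠ 0 := by
        rw [← pval_norm hroot (t.1 - (a:ℚ), t.2)]
        exact mul_ne_zero h1 h2
      exact_mod_cast hnm

lemma cj_rec (hirr : Irrational ξ) (hroot : ξ^2 + P * ξ + Q = 0) (n : ℕ) :
    pval (-(P:ℝ) - ξ) (pseq P Q ξ (n+1))
      = (pval (-(P:ℝ) - ξ) (pseq P Q ξ n) - (cfDigit ξ n : ℝ))⁻¹ := by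
  obtain ⟨hv, hs⟩ := pseq_spec hirr hroot n
  set t := pseq P Q ξ n with ht
  set a := cfDigit ξ n with ha
  set η := -(P:ℝ) - ξ with hη
  have hη2 : -(P:ℝ) - η = ξ := by rw [hη]; ring
  have hfr : Int.fract (cq ξ n) ≠ 0 := (fract_pos (irrational_cq hirr n)).ne'
  have h1 : pval η (t.1 - (a:ℚ), t.2) ≠ 0 :=
    (pval_irrational (eta_irr hirr) (by exact hs)).ne_zero
  have h2 : pval (-(P:ℝ) - η) (t.1 - (a:ℚ), t.2) ≠ 0 := by
    rw [hη2, pval_shift, hv]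
    show cq ξ n - (⌊cq ξ n⌋ : ℝ) ≠ 0
    rw [← Int.fract]
    exact hfr
  have hstep := pval_pstep (eta_root hroot) (by rw [hη2]; exact hroot) a t h1 h2
  show pval η (pstep P Q a t) = _
  rw [hstep, pval_shift]

end Machinery

theorem reduced_palindrome (P Q : ℤ) (ξ : ℝ) (hirr : Irrational ξ)
    (hroot : ξ^2 + P * ξ + Q = 0) (hfl : P = -⌊ξ⌋) (hgt : 1 < ξ)
    (u : List ℤ) (hu : IsCFPeriod ξ u) : ∃ t, u.reverse = u.rotate t := by
  obtain ⟨hne, N, hN⟩ := hu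
  set k := u.length with hkdef
  have hk : 0 < k := List.length_pos_iff.2 hne
  set a : ℕ → ℤ := cfDigit ξ with haf
  set η : ℝ := -(P:ℝ) - ξ with hη
  set cj : ℕ → ℝ := fun n => pval η (pseq P Q ξ n) with hcj
  have ha1 : ∀ n, 1 ≤ a n := by
    intro n
    cases n with
    | zero =>
      show 1 ≤ cfDigit ξ 0
      unfold cfDigit
      rw [cq_zero]
      exact Int.le_floor.2 (by exact_mod_cast hgt.le)
    | succ n => exact one_le_cfDigit hirr n
  have hcjrec : ∀ n, cj (n+1) = (cj n - (a n : ℝ))⁻¹ := fun n => cj_rec hirr hroot n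
  have hcj0 : cj 0 = η := by
    show pval η (0,1) = η
    unfold pval
    push_cast
    ring
  have hf1 : 0 < Int.fract ξ := fract_pos hirr
  have hf2 := Int.fract_lt_one ξ
  have hred : ∀ n, -1 < cj n ∧ cj n < 0 := by
    intro n
    induction n with
    | zero =>
      rw [hcj0, hη, hfl]
      rw [Int.fract] at hf1 hf2
      push_cast
      constructor <;> linarith
    | succ n ih =>
      rw [hcjrec n]
      have han := ha1 n
      have h1R : (1:ℝ) ≤ (a n : ℝ) := by exact_mod_cast han
      have hlt : cj n - (a n:ℝ) < -1 := by linarith [ih.2]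
      have hlt0 : cj n - (a n:ℝ) < 0 := by linarith
      constructor
      · by_contra hc
        push_neg at hc
        have hmul : (cj n - (a n:ℝ)) * (cj n - (a n:ℝ))⁻¹ = 1 :=
          mul_inv_cancel₀ (ne_of_lt hlt0)
        nlinarith [hmul, hlt, hc]
      · exact inv_lt_zero.2 hlt0
  set z : ℕ → ℝ := fun n => -(cj n)⁻¹ with hz
  have hz1 : ∀ n, 1 < z n := by
    intro n
    obtain ⟨hr1, hr2⟩ := hred n
    show 1 < -(cj n)⁻¹
    rw [← inv_neg, one_lt_inv_iff₀]
    constructor <;> linarith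
  have hzrec : ∀ n, z (n+1) = (a n : ℝ) + (z n)⁻¹ := by
    intro n
    show -(cj (n+1))⁻¹ = (a n : ℝ) + (-(cj n)⁻¹)⁻¹
    rw [hcjrec n, inv_inv, ← inv_neg, inv_inv]
    ring
  have hzread : ∀ n, ⌊z (n+1)⌋ = a n ∧ cq (z (n+1)) 1 = z n :=
    fun n => step_read (hz1 n) (hzrec n)
  have hcqz : ∀ j n, cq (z (n + j)) j = z n := by
    intro j
    induction j with
    | zero =>
      intro n
      rw [Nat.add_zero]
      exact cq_zero _
    | succ j ih =>
      intro n
      have e : n + (j+1) = (n+1) + j := by omega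
      rw [e, cq_add _ j 1, ih (n+1), (hzread n).2]
  have hdig : ∀ i j, cfDigit (z (i + 1 + j)) j = a i := by
    intro i j
    unfold cfDigit
    rw [show i + 1 + j = (i+1) + j from rfl, hcqz j (i+1)]
    exact (hzread i).1
  have hz0 : z 0 = cq ξ 1 := by
    show -(cj 0)⁻¹ = cq ξ 1
    rw [hcj0, hη, hfl, cq_succ, cq_zero, Int.fract]
    push_cast
    rw [show -(-(⌊ξ⌋:ℝ)) - ξ = -(ξ - (⌊ξ⌋:ℝ)) by ring, inv_neg, neg_neg]
  have hdeep : ∀ m i, cfDigit (z m) (m + i) = cfDigit ξ (1 + i) := by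
    intro m i
    rw [cfDigit_shift (z m) m i]
    rw [show z m = z (0 + m) by rw [Nat.zero_add], hcqz m 0, hz0, ← cfDigit_shift]
  have hdigits_per : ∀ i, N ≤ i → a i = u.getD ((i - N) % k) 0 := by
    intro i hi
    have := hN (i - N)
    rw [show N + (i - N) = i by omega] at this
    exact this
  have hper : ∀ n, N ≤ n → cq ξ (n + k) = cq ξ n := by
    intro n hn
    apply cf_inj (irrational_cq hirr _) (irrational_cq hirr _)
    intro j
    rw [← cfDigit_shift, ← cfDigit_shift]
    rw [show cfDigit ξ (n + k + j) = a (n + k + j) from rfl,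
        show cfDigit ξ (n + j) = a (n + j) from rfl]
    rw [hdigits_per (n + k + j) (by omega), hdigits_per (n + j) (by omega)]
    congr 1
    have e : n + k + j - N = (n + j - N) + k := by omega
    rw [e, Nat.add_mod_right]
  have hzper : ∀ n, N ≤ n → z (n + k) = z n := by
    intro n hn
    have hpp : pseq P Q ξ (n + k) = pseq P Q ξ n := by
      apply pval_injective hirr
      rw [(pseq_spec hirr hroot (n+k)).1, (pseq_spec hirr hroot n).1]
      exact hper n hn
    show -(pval η (pseq P Q ξ (n+k)))⁻¹ = -(pval η (pseq P Q ξ n))⁻¹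
    rw [hpp]
  have hziter : ∀ t n, N ≤ n → z (n + k * t) = z n := by
    intro t
    induction t with
    | zero =>
      intro n hn
      rw [Nat.mul_zero, Nat.add_zero]
    | succ t ih =>
      intro n hn
      have e : n + k * (t+1) = (n + k) + k * t := by ring
      rw [e, ih (n+k) (by omega), hzper n hn]
  set W := z (N + k) with hW
  have hWrev : ∀ j, cfDigit W j = u.reverse.getD (j % u.reverse.length) 0 := by
    intro j
    have hkt : j + 1 ≤ k * (j + 1) := Nat.le_mul_of_pos_left _ hk
    have hWm : W = z (N + k + k * (j+1)) := by
      rw [hW, show N + k + k*(j+1) = (N+k) + k*(j+1) from rfl,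
        hziter (j+1) (N+k) (by omega)]
    have hi : N + k + k * (j+1) = (N + (k + k*(j+1) - 1 - j)) + 1 + j := by omega
    rw [hWm, hi, hdig (N + (k + k*(j+1) - 1 - j)) j]
    rw [hdigits_per _ (by omega)]
    have hsum : k * (j+2) = k + k * (j+1) := by ring
    have e2 : N + (k + k*(j+1) - 1 - j) - N = k * (j + 2) - 1 - j := by omega
    rw [e2, mod_helper hk (by omega : j + 1 ≤ k * (j+2))]
    rw [List.length_reverse, ← hkdef, getD_reverse u (j % k) (Nat.mod_lt _ hk), ← hkdef]
  have hWrot : ∀ i, cfDigit W ((N + k + N) + i)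
      = (u.rotate 1).getD (i % (u.rotate 1).length) 0 := by
    intro i
    rw [show (N + k + N) + i = (N + k) + (N + i) by omega]
    rw [hW, hdeep (N + k) (N + i)]
    rw [show cfDigit ξ (1 + (N + i)) = a (N + (1 + i)) by rw [haf]; congr 1; omega]
    rw [hN (1 + i)]
    rw [List.length_rotate, ← hkdef]
    rw [getD_rotate u 1 (i % k) (Nat.mod_lt _ hk), ← hkdef]
    congr 1
    rw [Nat.mod_add_mod, Nat.add_comm]
  obtain ⟨t, ht⟩ := period_words_rotate (w := W) (u₁ := u.rotate 1) (u₂ := u.reverse)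
    (N₁ := N + k + N) (N₂ := 0)
    (by rw [List.length_rotate, List.length_reverse])
    (by rw [List.length_rotate]; exact hk)
    hWrot (by intro i; rw [Nat.zero_add]; exact hWrev i)
  exact ⟨1 + t, by rw [ht, List.rotate_rotate]⟩

theorem larger_root_palindrome (P Q : ℤ) (ξ : ℝ) (hirr : Irrational ξ)
    (hroot : ξ^2 + P * ξ + Q = 0) (hlt : -(P:ℝ) - ξ < ξ)
    (u : List ℤ) (hu : IsCFPeriod ξ u) : ∃ t, u.reverse = u.rotate t := by
  obtain ⟨hne, N, hN⟩ := hu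
  set k := u.length with hkdef
  have hk : 0 < k := List.length_pos_iff.2 hne
  set c : ℤ := ⌊ξ⌋ + P with hc
  set P' : ℤ := P - 2*c with hP'
  set Q' : ℤ := c^2 - P*c + Q with hQ'
  set ξ' : ℝ := ξ + (c:ℝ) with hξ'
  have hirr' : Irrational ξ' := hirr.add_intCast c
  have hroot' : ξ'^2 + (P':ℝ) * ξ' + (Q':ℝ) = 0 := by
    rw [hξ', hP', hQ']
    push_cast
    linear_combination hroot
  have hflr : ⌊ξ'⌋ = ⌊ξ⌋ + c := by rw [hξ']; exact Int.floor_add_intCast ξ c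
  have hfl' : P' = -⌊ξ'⌋ := by rw [hflr, hP', hc]; ring
  -- discriminant
  set D : ℤ := P^2 - 4*Q with hDdef
  have hD : (2*ξ + (P:ℝ))^2 = (D:ℝ) := by
    rw [hDdef]
    push_cast
    linear_combination 4 * hroot
  have hpos : 0 < 2*ξ + (P:ℝ) := by linarith
  have hD1 : 1 ≤ D := by
    have h0 : (0:ℝ) < (D:ℝ) := by rw [← hD]; positivity
    have : (0:ℤ) < D := by exact_mod_cast h0
    omega
  have hDne1 : D ≠ 1 := by
    intro h
    have h2 : (2*ξ + (P:ℝ))^2 = 1 := by rw [hD, h]; norm_num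
    have h3 : 2*ξ + (P:ℝ) = 1 := by nlinarith
    exact hirr ⟨(1 - P)/2, by push_cast; linarith⟩
  have hDne4 : D ≠ 4 := by
    intro h
    have h2 : (2*ξ + (P:ℝ))^2 = 4 := by rw [hD, h]; norm_num
    have h3 : 2*ξ + (P:ℝ) = 2 := by nlinarith
    exact hirr ⟨(2 - P)/2, by push_cast; linarith⟩
  have hDmod : D % 4 = 0 ∨ D % 4 = 1 := by
    rcases Int.even_or_odd P with ⟨m, hm⟩ | ⟨m, hm⟩
    · left
      have hsq : P^2 = 4*(m*m) := by rw [hm]; ring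
      omega
    · right
      have hsq : P^2 = 4*(m*m+m) + 1 := by rw [hm]; ring
      omega
  have hD5 : 5 ≤ D := by omega
  have hgt2 : 2 < 2*ξ + (P:ℝ) := by
    have h5 : (5:ℝ) ≤ (D:ℝ) := by exact_mod_cast hD5
    nlinarith
  have h1' : 1 < ξ' := by
    have hfloor : ξ - 1 < (⌊ξ⌋:ℝ) := Int.sub_one_lt_floor ξ
    rw [hξ', hc]
    push_cast
    linarith
  have hu' : IsCFPeriod ξ' u := by
    refine ⟨hne, N + k, fun i => ?_⟩
    have e : N + k + i = 1 + (N + k + i - 1) := by omega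
    have e2 : ξ' = (c:ℝ) + ξ := by rw [hξ']; ring
    rw [e, e2, cfDigit_int_add c ξ (N + k + i - 1), ← e,
      show N + k + i = N + (k + i) by omega, hN (k + i)]
    congr 1
    rw [show k + i = i + k by omega, Nat.add_mod_right]
  exact reduced_palindrome P' Q' ξ' hirr' hroot' hfl' h1' u hu'

lemma conj_tail (p : ℤ) (x : ℝ) (hirr : Irrational x) :
    ∃ s₀ t₀ : ℕ, ∀ j, cq (-(p:ℝ) - x) (s₀ + j) = cq x (t₀ + j) := by
  set X : ℝ := -(p:ℝ) - x with hX
  have hf1 : 0 < Int.fract x := fract_pos hirr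
  have hf2 : Int.fract x < 1 := Int.fract_lt_one x
  set f := Int.fract x with hf
  have hfrX : Int.fract X = 1 - f := by
    have e : X = ((-p : ℤ):ℝ) + (-x) := by rw [hX]; push_cast; ring
    rw [e, fract_int_add', Int.fract_neg (ne_of_gt hf1)]
  have hcqX1 : cq X 1 = (1 - f)⁻¹ := by rw [cq_succ, cq_zero, hfrX]
  set y1 := cq x 1 with hy1def
  have hy1 : y1 = f⁻¹ := by rw [hy1def, cq_succ, cq_zero]
  have hy1gt : 1 < y1 := one_lt_cq hirr 0
  have hfy : f * y1 = 1 := by rw [hy1]; exact mul_inv_cancel₀ (ne_of_gt hf1)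
  have hy1m1 : (0:ℝ) < y1 - 1 := by linarith
  have hfne : (1:ℝ) - f ≠ 0 := by linarith
  have hinv : (y1 - 1) * (y1 - 1)⁻¹ = 1 := mul_inv_cancel₀ (ne_of_gt hy1m1)
  have h9 : (1 - f) * (1 + (y1 - 1)⁻¹) = 1 := by
    linear_combination f * hinv - (y1 - 1)⁻¹ * hfy
  have hid : cq X 1 = ((1:ℤ):ℝ) + (y1 - 1)⁻¹ := by
    rw [hcqX1]
    push_cast
    rw [eq_comm]
    exact eq_inv_of_mul_eq_one_left (by linear_combination h9)
  have hy1irr : Irrational y1 := irrational_cq hirr 1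
  have hy1ne2 : y1 ≠ 2 := by
    intro h
    exact (hy1irr.ne_int 2) (by rw [h]; norm_num)
  rcases lt_or_gt_of_ne hy1ne2 with hB | hA
  · -- 1 < y1 < 2 : cq X 2 = cq x 3
    refine ⟨2, 3, fun j => ?_⟩
    have hfl1 : ⌊y1⌋ = 1 := by
      rw [Int.floor_eq_iff]
      constructor <;> push_cast <;> linarith
    have hfr1 : Int.fract y1 = y1 - 1 := by
      rw [Int.fract, hfl1]
      norm_num
    set y2 := cq x 2 with hy2def
    have hy2 : y2 = (y1 - 1)⁻¹ := by
      rw [hy2def, show (2:ℕ) = 1 + 1 from rfl, cq_add, ← hy1def, cq_succ, cq_zero, hfr1]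
    have hXid : cq X 1 = ((1:ℤ):ℝ) + y2 := by rw [hid, hy2]
    have hstep : cq (((1:ℤ):ℝ) + y2) 1 = cq y2 1 := by
      have := cq_int_add 1 y2 0
      norm_num at this ⊢
      exact this
    have hcqX2 : cq X 2 = cq x 3 := by
      rw [show (2:ℕ) = 1 + 1 from rfl, cq_add, hXid, hstep,
        show (3:ℕ) = 2 + 1 from rfl, cq_add, ← hy2def]
    rw [cq_add X 2 j, hcqX2, ← cq_add x 3 j]
  · -- y1 > 2 : cq X 3 = cq x 2
    refine ⟨3, 2, fun j => ?_⟩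
    have hstep := step_read (by linarith : 1 < y1 - 1) hid
    have hcqX2 : cq X 2 = y1 - 1 := by
      rw [show (2:ℕ) = 1 + 1 from rfl, cq_add]
      exact hstep.2
    have hfr1 : Int.fract (y1 - 1) = Int.fract y1 := by
      rw [show (1:ℝ) = ((1:ℤ):ℝ) by norm_num, Int.fract_sub_intCast]
    have hcqX3 : cq X 3 = cq x 2 := by
      rw [show (3:ℕ) = 2 + 1 from rfl, cq_add, hcqX2, cq_succ, cq_zero, hfr1,
        show (2:ℕ) = 1 + 1 from rfl, cq_add, ← hy1def, cq_succ, cq_zero]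
    rw [cq_add X 3 j, hcqX3, ← cq_add x 2 j]

lemma rev_rot (b : List ℤ) (r : ℕ) (hr : r < b.length) :
    (b.rotate r).reverse = b.reverse.rotate (b.length - r) := by
  have hk : 0 < b.length := by omega
  apply List.ext_getElem
  · simp
  intro i hi hi'
  have hik : i < b.length := by simpa using hi
  have hL1 : (b.rotate r).reverse[i] = (b.rotate r)[(b.rotate r).length - 1 - i]'(by
      simp; omega) := List.getElem_reverse _
  have hL2 : (b.rotate r)[(b.rotate r).length - 1 - i]'(by simp; omega)
      = b[((b.length - 1 - i) + r) % b.length]'(Nat.mod_lt _ hk) := by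
    rw [List.getElem_rotate]
    congr 1
    simp
  have hR1 : (b.reverse.rotate (b.length - r))[i]'(by simpa using hi')
      = b.reverse[(i + (b.length - r)) % b.reverse.length]'(by
        rw [List.length_reverse]; exact Nat.mod_lt _ hk) := by
    rw [List.getElem_rotate]
  have hR2 : b.reverse[(i + (b.length - r)) % b.reverse.length]'(by
        rw [List.length_reverse]; exact Nat.mod_lt _ hk)
      = b[b.length - 1 - ((i + (b.length - r)) % b.length)]'(by omega) := by
    rw [List.getElem_reverse]
    congr 1 <;> rw [List.length_reverse]
  rw [hL1, hL2, hR1, hR2]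
  congr 1
  rcases Nat.lt_or_ge i r with hcase | hcase
  · have hLv : (b.length - 1 - i + r) % b.length = r - 1 - i := by
      rw [show b.length - 1 - i + r = (r - 1 - i) + b.length by omega, Nat.add_mod_right]
      exact Nat.mod_eq_of_lt (by omega)
    have hRv : (i + (b.length - r)) % b.length = i + (b.length - r) :=
      Nat.mod_eq_of_lt (by omega)
    rw [hLv, hRv]
    omega
  · have hLv : (b.length - 1 - i + r) % b.length = b.length - 1 - i + r :=
      Nat.mod_eq_of_lt (by omega)
    have hRv : (i + (b.length - r)) % b.length = i - r := by
      rw [show i + (b.length - r) = (i - r) + b.length by omega, Nat.add_mod_right]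
      exact Nat.mod_eq_of_lt (by omega)
    rw [hLv, hRv]
    omega

/-- The period of the continued fraction of an irrational root of a monic
integer quadratic `x² + px + q = 0` is, as a cyclic sequence, a palindrome:
some cyclic rotation of it equals its own reversal. -/
theorem period_is_palindrome
    (p q : ℤ) (x : ℝ) (hirr : Irrational x)
    (hroot : x ^ 2 + (p : ℝ) * x + (q : ℝ) = 0)
    (b : List ℤ) (hb : IsMinCFPeriod x b) :
    ∃ k : ℕ, b.reverse = b.rotate k := by
  obtain ⟨hbper, -⟩ := hb
  obtain ⟨hne, N, hN⟩ := hbper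
  set k := b.length with hkdef
  have hk : 0 < k := List.length_pos_iff.2 hne
  set X : ℝ := -(p:ℝ) - x with hX
  have hXirr : Irrational X := eta_irr hirr
  have hne2 : X ≠ x := by
    intro h
    apply hirr
    refine ⟨(-p : ℚ)/2, ?_⟩
    push_cast
    rw [hX] at h
    linarith
  rcases lt_or_gt_of_ne hne2 with hlt | hgt
  · exact larger_root_palindrome p q x hirr hroot hlt b ⟨hne, N, hN⟩
  · have hXroot : X^2 + (p:ℝ)*X + (q:ℝ) = 0 := eta_root hroot
    have hXlt : -(p:ℝ) - X < X := by
      have e : -(p:ℝ) - X = x := by rw [hX]; ring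
      rw [e]
      exact hgt
    obtain ⟨s₀, t₀, htail⟩ := conj_tail p x hirr
    set r := t₀ % k with hr
    have hrk : r < k := Nat.mod_lt _ hk
    have hrotne : b.rotate r ≠ [] := by
      intro h
      apply hne
      have := congrArg List.length h
      rw [List.length_rotate] at this
      exact List.length_eq_zero_iff.1 this
    have hXper : IsCFPeriod X (b.rotate r) := by
      refine ⟨hrotne, s₀ + (N + k), fun i => ?_⟩
      have hd : cfDigit X (s₀ + ((N + k) + i)) = cfDigit x (t₀ + ((N + k) + i)) := by
        unfold cfDigit
        rw [htail ((N + k) + i)]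
      rw [show s₀ + (N + k) + i = s₀ + ((N + k) + i) by omega, hd,
        show t₀ + ((N + k) + i) = N + (k + t₀ + i) by omega, hN (k + t₀ + i)]
      rw [List.length_rotate, ← hkdef]
      rw [getD_rotate b r (i % k) (by rw [← hkdef]; exact Nat.mod_lt _ hk), ← hkdef]
      congr 1
      rw [hr, Nat.add_mod_mod, Nat.mod_add_mod]
      rw [show k + t₀ + i = (t₀ + i) + k by omega, Nat.add_mod_right, Nat.add_comm]
    obtain ⟨t, ht⟩ := larger_root_palindrome p q X hXirr hXroot hXlt _ hXper
    rw [rev_rot b r hrk, List.rotate_rotate] at ht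
    refine ⟨r + t + r, ?_⟩
    have h2 := congrArg (fun l => l.rotate r) ht
    rw [List.rotate_rotate, List.rotate_rotate] at h2
    rw [show b.length - r + r = b.length by omega] at h2
    rw [show b.length = b.reverse.length by rw [List.length_reverse]] at h2
    rw [List.rotate_length] at h2
    exact h2
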